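/- With v_n as above, the kernel K_uni(x,y) = ∑_{n=1}^∞ ((−1)^n/⌈n/2⌉³) v_n(x) v_n(y) has the property that the series ∑_{n=1}^∞ ((−1)^n/⌈n/2⌉³) v_n(x)v_n(y) does not converge uniformly on [−1,1]×[−1,1]; specifically, for every m ≥ 1, sup_{x,y ∈ [−1,1]} |(1/m³) v_{2m}(x) v_{2m}(y)| > 4/3. -/

import Mathlib

open MeasureTheory Polynomial Filter

/-- `leftPt m = -1 + (12/π²) ∑_{j=1}^m 1/j²`. -/
noncomputable def leftPt (m : ℕ) : ℝ :=
  -1 + (12 / Real.pi ^ 2) * ∑ j ∈ Finset.range m, 1 / ((j : ℝ) + 1) ^ 2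

/-- The interval `I_m` (for `m ≥ 1`), of length `12/(π²m²)`. -/
noncomputable def Iint (m : ℕ) : Set ℝ := Set.Ioo (leftPt (m - 1)) (leftPt m)

/-- The increasing affine bijection from `I_m` onto `[-1,1]`. -/
noncomputable def iMap (m : ℕ) (x : ℝ) : ℝ :=
  (Real.pi ^ 2 * (m : ℝ) ^ 2 / 6) * (x - leftPt (m - 1)) - 1

/-- `Ũ_k(t) = √(2/π) (1-t²)^{1/4} U_k(t)` with `U_k` the Chebyshev polynomial of the
second kind. -/
noncomputable def UTilde (k : ℕ) (t : ℝ) : ℝ :=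
  Real.sqrt (2 / Real.pi) * (1 - t ^ 2) ^ ((1 : ℝ) / 4) *
    (Polynomial.Chebyshev.U ℝ (k : ℤ)).eval t

/-- The orthonormal functions `v_n` (for `n ≥ 1`). -/
noncomputable def vfun (n : ℕ) : ℝ → ℝ :=
  let m := (n + 1) / 2
  if n % 2 = 1 then
    Set.indicator (Iint m) (fun x => -((m : ℝ) * Real.pi / Real.sqrt 6) * UTilde (2 * m) (iMap m x))
  else
    Set.indicator (Iint m) (fun x => ((m : ℝ) * Real.pi / Real.sqrt 6) * UTilde (2 * m + 2) (iMap m x))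

lemma leftPt_le_one (m : ℕ) : leftPt m ≤ 1 := by
  have hπ : (0:ℝ) < Real.pi := Real.pi_pos
  have h : ∑ j ∈ Finset.range m, 1 / ((j : ℝ) + 1) ^ 2 ≤ Real.pi ^ 2 / 6 := by
    have hle := sum_le_hasSum (Finset.range (m + 1))
      (fun i _ => by positivity) hasSum_zeta_two
    calc ∑ j ∈ Finset.range m, 1 / ((j : ℝ) + 1) ^ 2
        = ∑ n ∈ Finset.range (m + 1), 1 / (n : ℝ) ^ 2 := by
          rw [Finset.sum_range_succ' (fun n => 1 / (n : ℝ) ^ 2) m]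
          push_cast
          norm_num
      _ ≤ Real.pi ^ 2 / 6 := hle
  have h2 : (12 / Real.pi ^ 2) * ∑ j ∈ Finset.range m, 1 / ((j : ℝ) + 1) ^ 2
      ≤ (12 / Real.pi ^ 2) * (Real.pi ^ 2 / 6) :=
    mul_le_mul_of_nonneg_left h (by positivity)
  have h3 : (12 / Real.pi ^ 2) * (Real.pi ^ 2 / 6) = 2 := by
    field_simp
    norm_num
  unfold leftPt
  linarith

lemma neg_one_le_leftPt (m : ℕ) : -1 ≤ leftPt m := by
  have hπ : (0:ℝ) < Real.pi := Real.pi_pos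
  have h : (0:ℝ) ≤ (12 / Real.pi ^ 2) * ∑ j ∈ Finset.range m, 1 / ((j : ℝ) + 1) ^ 2 := by
    apply mul_nonneg (by positivity)
    apply Finset.sum_nonneg
    intro i _
    positivity
  unfold leftPt
  linarith

lemma leftPt_succ (m : ℕ) :
    leftPt (m + 1) = leftPt m + 12 / Real.pi ^ 2 * (1 / ((m : ℝ) + 1) ^ 2) := by
  unfold leftPt
  rw [Finset.sum_range_succ]
  ring

lemma vfun_even (m : ℕ) : vfun (2 * m) =
    Set.indicator (Iint m)
      (fun x => ((m : ℝ) * Real.pi / Real.sqrt 6) * UTilde (2 * m + 2) (iMap m x)) := by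
  have h2 : (2 * m + 1) / 2 = m := by omega
  unfold vfun
  simp only [Nat.mul_mod_right, h2]
  norm_num

set_option maxHeartbeats 1000000 in
lemma key_lemma (m : ℕ) (hm : 1 ≤ m) :
    ∃ x ∈ Set.Icc (-1:ℝ) 1,
      4 / 3 < |(1 / (m : ℝ) ^ 3) * (vfun (2 * m) x * vfun (2 * m) x)| := by
  have hm0 : (0:ℝ) < m := by exact_mod_cast hm
  have hπ : (0:ℝ) < Real.pi := Real.pi_pos
  set θ : ℝ := Real.pi / (2 * (2 * (m : ℝ) + 3)) with hθdef
  have hθ0 : 0 < θ := by positivity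
  have hθπ : θ < Real.pi := by
    rw [hθdef, div_lt_iff₀ (by positivity)]
    nlinarith
  have hs : 0 < Real.sin θ := Real.sin_pos_of_pos_of_lt_pi hθ0 hθπ
  set s : ℝ := Real.sin θ with hsdef
  set t : ℝ := Real.cos θ with htdef
  have ht2 : s ^ 2 + t ^ 2 = 1 := Real.sin_sq_add_cos_sq θ
  have hs1 : s ≤ 1 := Real.sin_le_one θ
  have ht1 : t < 1 := by nlinarith
  have htm1 : -1 < t := by nlinarith
  set x : ℝ := leftPt (m - 1) + 6 / (Real.pi ^ 2 * (m : ℝ) ^ 2) * (t + 1) with hxdef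
  have hpos : 0 < 6 / (Real.pi ^ 2 * (m : ℝ) ^ 2) := by positivity
  have hIl : leftPt (m - 1) < x := by
    rw [hxdef]
    nlinarith
  have hstep : leftPt m = leftPt (m - 1) + 12 / Real.pi ^ 2 * (1 / (m : ℝ) ^ 2) := by
    obtain ⟨k, rfl⟩ : ∃ k, m = k + 1 := ⟨m - 1, by omega⟩
    rw [leftPt_succ]
    push_cast
    norm_num
  have hIr : x < leftPt m := by
    rw [hstep, hxdef]
    have : 6 / (Real.pi ^ 2 * (m : ℝ) ^ 2) * (t + 1)
        < 6 / (Real.pi ^ 2 * (m : ℝ) ^ 2) * 2 := by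
      apply mul_lt_mul_of_pos_left (by linarith) hpos
    have h2 : 6 / (Real.pi ^ 2 * (m : ℝ) ^ 2) * 2 = 12 / Real.pi ^ 2 * (1 / (m : ℝ) ^ 2) := by
      field_simp
      ring
    linarith
  have hxI : x ∈ Iint m := ⟨hIl, hIr⟩
  have hx1 : x ∈ Set.Icc (-1:ℝ) 1 :=
    ⟨le_trans (neg_one_le_leftPt _) hIl.le, le_trans hIr.le (leftPt_le_one m)⟩
  refine ⟨x, hx1, ?_⟩
  have hiMap : iMap m x = t := by
    rw [iMap, hxdef]
    have hm' : (m : ℝ) ≠ 0 := ne_of_gt hm0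
    field_simp
    ring
  rw [vfun_even, Set.indicator_of_mem hxI, hiMap]
  -- evaluate the Chebyshev polynomial
  have hU : Polynomial.eval t (Polynomial.Chebyshev.U ℝ ((2 * m + 2 : ℕ) : ℤ)) = 1 / s := by
    have h := Polynomial.Chebyshev.U_real_cos θ ((2 * m + 2 : ℕ) : ℤ)
    have harg : ((((2 * m + 2 : ℕ) : ℤ) : ℝ) + 1) * θ = Real.pi / 2 := by
      push_cast
      rw [hθdef]
      field_simp
      ring
    rw [harg, Real.sin_pi_div_two, ← htdef, ← hsdef] at h
    rw [eq_div_iff hs.ne']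
    exact h
  have hquarter : ((s ^ 2) ^ ((1:ℝ)/4)) ^ 2 = s := by
    rw [← Real.rpow_natCast ((s ^ 2) ^ ((1:ℝ)/4)) 2, ← Real.rpow_mul (sq_nonneg _)]
    norm_num
    rw [← Real.sqrt_eq_rpow, Real.sqrt_sq hs.le]
  have h1t : 1 - t ^ 2 = s ^ 2 := by linarith
  have hUT : UTilde (2 * m + 2) t ^ 2 = 2 / Real.pi * (1 / s) := by
    unfold UTilde
    rw [hU, h1t, mul_pow, mul_pow, hquarter, Real.sq_sqrt (by positivity : (0:ℝ) ≤ 2 / Real.pi)]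
    field_simp
  set u : ℝ := UTilde (2 * m + 2) t with hudef
  have heq : (1 / (m : ℝ) ^ 3) * (((m : ℝ) * Real.pi / Real.sqrt 6 * u) *
      ((m : ℝ) * Real.pi / Real.sqrt 6 * u))
      = (1 / (m : ℝ) ^ 3) * (((m : ℝ) * Real.pi / Real.sqrt 6) ^ 2 * u ^ 2) := by ring
  have hc2 : ((m : ℝ) * Real.pi / Real.sqrt 6) ^ 2 = (m : ℝ) ^ 2 * Real.pi ^ 2 / 6 := by
    rw [div_pow, mul_pow, Real.sq_sqrt (by norm_num : (0:ℝ) ≤ 6)]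
  have hsθ : s < θ := Real.sin_lt hθ0
  have h4ms : 4 * (m : ℝ) * s < Real.pi := by
    have h1 : 4 * (m : ℝ) * s < 4 * (m : ℝ) * θ := by
      apply mul_lt_mul_of_pos_left hsθ (by positivity)
    have hd : (0:ℝ) < 2 * (2 * (m : ℝ) + 3) := by positivity
    have h2 : 4 * (m : ℝ) * θ ≤ Real.pi := by
      rw [hθdef, ← mul_div_assoc, div_le_iff₀ hd]
      nlinarith
    linarith
  have hval : (1 / (m : ℝ) ^ 3) * (((m : ℝ) ^ 2 * Real.pi ^ 2 / 6) * (2 / Real.pi * (1 / s)))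
      = Real.pi / (3 * (m : ℝ) * s) := by
    field_simp
    ring
  have hnn : (0:ℝ) ≤ 1 / (m : ℝ) ^ 3 * ((m : ℝ) * Real.pi / Real.sqrt 6 * u *
      ((m : ℝ) * Real.pi / Real.sqrt 6 * u)) :=
    mul_nonneg (by positivity) (mul_self_nonneg _)
  have h3ms : (0:ℝ) < 3 * (m : ℝ) * s := mul_pos (mul_pos (by norm_num) hm0) hs
  rw [abs_of_nonneg hnn, heq, hc2, hUT, hval, lt_div_iff₀ h3ms]
  nlinarith

/-- The Mercer expansion `∑_{n≥1} ((-1)^n/⌈n/2⌉³) v_n(x) v_n(y)` of `K_uni` does not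
converge uniformly on `[-1,1]²`; specifically, each even term has uniform norm `> 4/3`. -/
theorem Kuni_not_uniform :
    (¬ ∃ F : ℝ × ℝ → ℝ, TendstoUniformlyOn
      (fun N : ℕ => fun p : ℝ × ℝ =>
        ∑ n ∈ Finset.Icc 1 N,
          ((-1 : ℝ) ^ n / (((n + 1) / 2 : ℕ) : ℝ) ^ 3) * vfun n p.1 * vfun n p.2)
      F atTop (Set.Icc (-1 : ℝ) 1 ×ˢ Set.Icc (-1 : ℝ) 1)) ∧
    (∀ m : ℕ, 1 ≤ m → ∃ x ∈ Set.Icc (-1 : ℝ) 1, ∃ y ∈ Set.Icc (-1 : ℝ) 1,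
      4 / 3 < |(1 / (m : ℝ) ^ 3) * (vfun (2 * m) x * vfun (2 * m) y)|) := by
  constructor
  · rintro ⟨F, hF⟩
    rw [Metric.tendstoUniformlyOn_iff] at hF
    obtain ⟨N₀, hN₀⟩ := Filter.eventually_atTop.mp (hF (2/3) (by norm_num))
    set m : ℕ := N₀ + 1 with hmdef
    have hm : 1 ≤ m := by omega
    obtain ⟨x, hx, hbig⟩ := key_lemma m hm
    set p : ℝ × ℝ := (x, x) with hpdef
    have hpmem : p ∈ Set.Icc (-1:ℝ) 1 ×ˢ Set.Icc (-1:ℝ) 1 := ⟨hx, hx⟩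
    have h1 := hN₀ (2 * m) (by omega) p hpmem
    have h2 := hN₀ (2 * m - 1) (by omega) p hpmem
    set g : ℕ → ℝ := fun n =>
      ((-1 : ℝ) ^ n / (((n + 1) / 2 : ℕ) : ℝ) ^ 3) * vfun n p.1 * vfun n p.2 with hgdef
    have hsplit : ∑ n ∈ Finset.Icc 1 (2 * m), g n
        = ∑ n ∈ Finset.Icc 1 (2 * m - 1), g n + g (2 * m) := by
      obtain ⟨k, hk⟩ : ∃ k, 2 * m = k + 1 := ⟨2 * m - 1, by omega⟩
      rw [hk, Finset.sum_Icc_succ_top (by omega)]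
      congr 2 <;> omega
    have hgval : g (2 * m) = (1 / (m : ℝ) ^ 3) * (vfun (2 * m) x * vfun (2 * m) x) := by
      rw [hgdef]
      have h14 : (2 * m + 1) / 2 = m := by omega
      simp only [h14]
      have hpow : (-1 : ℝ) ^ (2 * m) = 1 := by
        rw [pow_mul]
        norm_num
      rw [hpow]
      ring
    have hdist : |g (2 * m)| < 4 / 3 := by
      have htri : dist (∑ n ∈ Finset.Icc 1 (2 * m), g n)
          (∑ n ∈ Finset.Icc 1 (2 * m - 1), g n)
          ≤ dist (∑ n ∈ Finset.Icc 1 (2 * m), g n) (F p)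
            + dist (F p) (∑ n ∈ Finset.Icc 1 (2 * m - 1), g n) := dist_triangle _ _ _
      rw [dist_comm (∑ n ∈ Finset.Icc 1 (2 * m), g n) (F p)] at htri
      have := lt_of_le_of_lt htri (by linarith [h1, h2] : dist (F p)
          (∑ n ∈ Finset.Icc 1 (2 * m), g n)
          + dist (F p) (∑ n ∈ Finset.Icc 1 (2 * m - 1), g n) < 4 / 3)
      rwa [Real.dist_eq, hsplit, add_sub_cancel_left] at this
    rw [hgval] at hdist
    linarith
  · intro m hm
    obtain ⟨x, hx, hbig⟩ := key_lemma m hm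
    exact ⟨x, hx, x, hx, hbig⟩
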